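/- arXiv:2207.06615 — 8 statements merged into one kernel-verified Lean document; each statement's English description precedes it below -/
import Mathlib

section
/- Let N ≥ 1, f : Fin N → Fin N, Λ ⊆ Fin N and Φ ⊆ Fin N. Let τ be the transient period of f and λ the least common multiple of the minimal periods of the periodic points of f. Then the system is approximately synchronous with respect to Φ (i.e., there exists an integer ρ ≥ 1 such that f^[t] x ∈ Λ for all x ∈ Φ and all t ≥ ρ) if and only if f^[t] x ∈ Λ for every x ∈ Φ and every t with τ ≤ t ≤ τ + λ − 1. -/
open scoped Classical

/-- Theorem 1(1): the system is approximately synchronous with respect to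
`Φ` iff `f^[t] x ∈ Λ` for every `x ∈ Φ` and every `t` with
`τ ≤ t ≤ τ + λ − 1`, where `τ` is the transient period and `λ` the lcm
of the minimal periods of the periodic points. -/
theorem approx_sync_iff_window (N : ℕ) (hN : 1 ≤ N) (f : Fin N → Fin N)
    (Λ Φ : Set (Fin N))
    (τ : ℕ) (hτ : IsLeast {t : ℕ | ∀ x : Fin N, f^[t] x ∈ Function.periodicPts f} τ)
    (lam : ℕ)
    (hlam : lam = (Finset.univ.filter fun x : Fin N => x ∈ Function.periodicPts f).lcm
      (Function.minimalPeriod f)) :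
    (∃ ρ : ℕ, 1 ≤ ρ ∧ ∀ x ∈ Φ, ∀ t ≥ ρ, f^[t] x ∈ Λ) ↔
    (∀ x ∈ Φ, ∀ t : ℕ, τ ≤ t → t ≤ τ + lam - 1 → f^[t] x ∈ Λ) := by
  -- every periodic point is a periodic point of period lam
  have hper : ∀ y : Fin N, y ∈ Function.periodicPts f →
      Function.IsPeriodicPt f lam y := by
    intro y hy
    have hdvd : Function.minimalPeriod f y ∣ lam := by
      rw [hlam]
      exact Finset.dvd_lcm (by simp [hy])
    obtain ⟨k, hk⟩ := hdvd
    rw [hk]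
    exact (Function.isPeriodicPt_minimalPeriod f y).mul_const k
  have hlam_pos : 0 < lam := by
    rcases Nat.eq_zero_or_pos lam with h0 | h
    · exfalso
      rw [hlam, Finset.lcm_eq_zero_iff] at h0
      obtain ⟨y, hy, hy0⟩ := h0
      simp only [Finset.coe_filter, Finset.mem_filter, Finset.mem_univ, true_and, Set.mem_setOf_eq] at hy
      have := Function.minimalPeriod_pos_of_mem_periodicPts hy
      omega
    · exact h
  constructor
  · rintro ⟨ρ, hρ1, hρ⟩ x hx t ht1 ht2
    -- choose k with t + k * lam ≥ ρ
    have hy : f^[t] x ∈ Function.periodicPts f := by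
      obtain ⟨s, hs⟩ := Nat.exists_eq_add_of_le ht1
      have hy0 : f^[τ] x ∈ Function.periodicPts f := hτ.1 x
      obtain ⟨n, hn, hpn⟩ := hy0
      rw [hs, add_comm, Function.iterate_add_apply]
      exact ⟨n, hn, hpn.apply_iterate s⟩
    have hp := hper _ hy
    have key : ∀ k : ℕ, f^[t + k * lam] x = f^[t] x := by
      intro k
      rw [add_comm, Function.iterate_add_apply]
      exact (hp.const_mul k)
    have := hρ x hx (t + ρ * lam) (by nlinarith [hlam_pos, hρ1])
    rw [key ρ] at this
    exact this
  · intro h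
    refine ⟨max τ 1, le_max_right _ _, ?_⟩
    intro x hx t ht
    have hτt : τ ≤ t := le_trans (le_max_left _ _) ht
    obtain ⟨s, hs⟩ := Nat.exists_eq_add_of_le hτt
    have hy : f^[τ] x ∈ Function.periodicPts f := hτ.1 x
    have hp := hper _ hy
    have : f^[t] x = f^[τ + s % lam] x := by
      rw [hs, add_comm τ s, Function.iterate_add_apply, add_comm τ (s % lam),
        Function.iterate_add_apply, hp.iterate_mod_apply s]
    rw [this]
    exact h x hx (τ + s % lam) (Nat.le_add_right _ _)
      (by have := Nat.mod_lt s hlam_pos; omega)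
end

section
/- Let N ≥ 1, f : Fin N → Fin N and Λ ⊆ Fin N. Let τ be the transient period of f. Then the system is globally approximately synchronous (i.e., there exists an integer ρ ≥ 1 such that f^[t] x ∈ Λ for all x ∈ Fin N and all t ≥ ρ) if and only if f^[τ] x ∈ Λ for every x ∈ Fin N (equivalently, every column of L^τ lies in Λ for the associated logic matrix L). -/
/-- Theorem 1(2): the system is globally approximately synchronous iff
`f^[τ] x ∈ Λ` for every state `x`, where `τ` is the transient period. -/
theorem global_approx_sync_iff_tau (N : ℕ) (hN : 1 ≤ N) (f : Fin N → Fin N)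
    (Λ : Set (Fin N))
    (τ : ℕ) (hτ : IsLeast {t : ℕ | ∀ x : Fin N, f^[t] x ∈ Function.periodicPts f} τ) :
    (∃ ρ : ℕ, 1 ≤ ρ ∧ ∀ x : Fin N, ∀ t ≥ ρ, f^[t] x ∈ Λ) ↔
    (∀ x : Fin N, f^[τ] x ∈ Λ) := by
  constructor
  · rintro ⟨ρ, hρ1, hρ⟩ x
    obtain ⟨n, hn, hper⟩ := hτ.1 x
    have hkey : f^[τ + n * ρ] x = f^[τ] x := by
      have : τ + n * ρ = ρ * n + τ := by ring
      rw [this, Function.iterate_add_apply]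
      exact hper.const_mul ρ
    have : f^[τ + n * ρ] x ∈ Λ := by
      apply hρ x
      calc ρ ≤ n * ρ := Nat.le_mul_of_pos_left ρ hn
        _ ≤ τ + n * ρ := Nat.le_add_left _ _
    rwa [hkey] at this
  · intro h
    refine ⟨τ + 1, Nat.le_add_left _ _, fun x t ht => ?_⟩
    obtain ⟨s, rfl⟩ : ∃ s, t = τ + s := ⟨t - τ, by omega⟩
    rw [Function.iterate_add_apply]
    exact h _
end

section
/- Let N ≥ 1, f : Fin N → Fin N, Λ ⊆ Fin N and Φ ⊆ Fin N. Let L be the N×N real logic matrix whose i-th column is e_{f i}, let τ be the transient period of f and λ the least common multiple of the minimal periods of the periodic points of f. Define the index vectors Ξ₁ = Σ_{i∈Φ} e_i and Ξ₂ = Σ_{i∈Λ} e_i in ℝ^N. Then the system is approximately synchronous with respect to Φ if and only if sgn((Σ_{t=τ}^{τ+λ−1} L^t) · Ξ₁) ≤ Ξ₂, where sgn is applied entrywise and ≤ is the entrywise order on ℝ^N. -/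
open scoped Classical

private lemma indicator_sum_apply {N : ℕ} (S : Finset (Fin N)) (j : Fin N) :
    (∑ k ∈ S, (Pi.single k (1 : ℝ) : Fin N → ℝ)) j = if j ∈ S then 1 else 0 := by
  rw [Finset.sum_apply]
  simp only [Pi.single_apply]
  exact Finset.sum_ite_eq S j (fun _ => (1 : ℝ))

/-- Corollary 2(1): approximate synchronization with respect to `Φ` holds
iff `sgn((∑_{t=τ}^{τ+λ−1} L^t) Ξ₁) ≤ Ξ₂` entrywise, where `Ξ₁, Ξ₂` are
the index vectors of `Φ` and `Λ`. -/
theorem approx_sync_iff_sign_condition (N : ℕ) (hN : 1 ≤ N) (f : Fin N → Fin N)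
    (Λ Φ : Finset (Fin N))
    (L : Matrix (Fin N) (Fin N) ℝ)
    (hL : L = Matrix.of fun i j => if i = f j then (1 : ℝ) else 0)
    (τ : ℕ) (hτ : IsLeast {t : ℕ | ∀ x : Fin N, f^[t] x ∈ Function.periodicPts f} τ)
    (lam : ℕ)
    (hlam : lam = (Finset.univ.filter fun x : Fin N => x ∈ Function.periodicPts f).lcm
      (Function.minimalPeriod f)) :
    (∃ ρ : ℕ, 1 ≤ ρ ∧ ∀ x ∈ Φ, ∀ t ≥ ρ, f^[t] x ∈ Λ) ↔
    (fun i : Fin N =>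
        Real.sign (((∑ t ∈ Finset.Icc τ (τ + lam - 1), L ^ t).mulVec
          (∑ i ∈ Φ, (Pi.single i (1 : ℝ) : Fin N → ℝ))) i)) ≤
      (∑ i ∈ Λ, (Pi.single i (1 : ℝ) : Fin N → ℝ)) := by
  -- lam is positive
  have hlam1 : 1 ≤ lam := by
    rcases Nat.eq_zero_or_pos lam with h0 | h; swap
    · exact h
    exfalso
    rw [hlam, Finset.lcm_eq_zero_iff] at h0
    obtain ⟨x, hx, hx0⟩ := h0
    simp only [Finset.coe_filter, Finset.mem_coe, Finset.mem_filter, Set.mem_setOf_eq] at hx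
    exact (Function.minimalPeriod_pos_of_mem_periodicPts hx.2).ne' hx0
  -- minimal periods of periodic points divide lam
  have hdvd : ∀ y : Fin N, y ∈ Function.periodicPts f →
      Function.minimalPeriod f y ∣ lam := by
    intro y hy
    rw [hlam]
    exact Finset.dvd_lcm (by simp [hy])
  -- key iteration lemma
  have key : ∀ (x : Fin N) (t : ℕ), τ ≤ t → f^[t] x = f^[τ + (t - τ) % lam] x := by
    intro x t ht
    obtain ⟨s, rfl⟩ := Nat.exists_eq_add_of_le ht
    have hy : f^[τ] x ∈ Function.periodicPts f := hτ.1 x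
    have hm := hdvd _ hy
    rw [Nat.add_sub_cancel_left]
    rw [Nat.add_comm τ s, Nat.add_comm τ (s % lam),
      Function.iterate_add_apply, Function.iterate_add_apply,
      ← Function.iterate_mod_minimalPeriod_eq (n := s),
      ← Function.iterate_mod_minimalPeriod_eq (n := s % lam),
      Nat.mod_mod_of_dvd s hm]
  -- combinatorial equivalence
  have comb : (∃ ρ : ℕ, 1 ≤ ρ ∧ ∀ x ∈ Φ, ∀ t ≥ ρ, f^[t] x ∈ Λ) ↔
      ∀ x ∈ Φ, ∀ t ∈ Finset.Icc τ (τ + lam - 1), f^[t] x ∈ Λ := by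
    constructor
    · rintro ⟨ρ, hρ1, hρ⟩ x hx t ht
      rw [Finset.mem_Icc] at ht
      have hT : t ≤ t + ρ * lam := Nat.le_add_right _ _
      have hTρ : ρ ≤ t + ρ * lam :=
        le_trans (Nat.le_mul_of_pos_right ρ hlam1) (Nat.le_add_left _ _)
      have h1 := key x t ht.1
      have h2 := key x (t + ρ * lam) (le_trans ht.1 hT)
      have : f^[t] x = f^[t + ρ * lam] x := by
        rw [h1, h2]
        congr 1
        have : t + ρ * lam - τ = (t - τ) + ρ * lam := by omega
        rw [this, Nat.add_mul_mod_self_right]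
      rw [this]
      exact hρ x hx _ hTρ
    · intro h
      refine ⟨max τ 1, le_max_right _ _, fun x hx t ht => ?_⟩
      have hτt : τ ≤ t := le_trans (le_max_left _ _) ht
      rw [key x t hτt]
      apply h x hx
      rw [Finset.mem_Icc]
      have := Nat.mod_lt (t - τ) (by omega : 0 < lam)
      omega
  -- powers of L
  have hpow : ∀ t : ℕ, L ^ t = Matrix.of fun i j => if i = f^[t] j then (1 : ℝ) else 0 := by
    intro t
    induction t with
    | zero =>
      ext i j
      simp [Matrix.one_apply]
      split_ifs with hs <;> simp [hs]
    | succ t ih =>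
      ext i j
      rw [pow_succ, ih, hL, Matrix.mul_apply]
      simp only [Matrix.of_apply]
      rw [Finset.sum_eq_single (f j)]
      · simp [Function.iterate_succ_apply]
        split_ifs with hs <;> simp [hs]
      · intro b _ hb
        rw [if_neg hb, mul_zero]
      · intro hfj
        exact absurd (Finset.mem_univ _) hfj
  -- compute the vector entries
  have hvec : ∀ i : Fin N,
      ((∑ t ∈ Finset.Icc τ (τ + lam - 1), L ^ t).mulVec
        (∑ i ∈ Φ, (Pi.single i (1 : ℝ) : Fin N → ℝ))) i =
      ∑ t ∈ Finset.Icc τ (τ + lam - 1), ∑ j ∈ Φ,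
        (if i = f^[t] j then (1 : ℝ) else 0) := by
    intro i
    rw [Matrix.mulVec, dotProduct]
    have : ∀ j : Fin N, (∑ t ∈ Finset.Icc τ (τ + lam - 1), L ^ t) i j =
        ∑ t ∈ Finset.Icc τ (τ + lam - 1), (if i = f^[t] j then (1 : ℝ) else 0) := by
      intro j
      rw [Matrix.sum_apply]
      exact Finset.sum_congr rfl fun t _ => by rw [hpow t]; rfl
    calc ∑ j : Fin N, (∑ t ∈ Finset.Icc τ (τ + lam - 1), L ^ t) i j *
          (∑ k ∈ Φ, (Pi.single k (1 : ℝ) : Fin N → ℝ)) j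
        = ∑ j : Fin N, (if j ∈ Φ then (1:ℝ) else 0) *
            ∑ t ∈ Finset.Icc τ (τ + lam - 1), (if i = f^[t] j then (1 : ℝ) else 0) := by
          refine Finset.sum_congr rfl fun j _ => ?_
          rw [this j, indicator_sum_apply, mul_comm]
      _ = ∑ j ∈ Φ, ∑ t ∈ Finset.Icc τ (τ + lam - 1), (if i = f^[t] j then (1 : ℝ) else 0) := by
          rw [← Finset.sum_filter_of_ne (p := fun j => j ∈ Φ)]
          · rw [Finset.filter_mem_eq_inter, Finset.univ_inter]
            exact Finset.sum_congr rfl fun j hj => by rw [if_pos hj, one_mul]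
          · intro j _ hne
            by_contra hj
            rw [if_neg hj, zero_mul] at hne
            exact hne rfl
      _ = _ := Finset.sum_comm
  -- nonnegativity
  have hnn : ∀ i : Fin N, (0:ℝ) ≤ ∑ t ∈ Finset.Icc τ (τ + lam - 1), ∑ j ∈ Φ,
      (if i = f^[t] j then (1 : ℝ) else 0) := by
    intro i
    refine Finset.sum_nonneg fun t _ => Finset.sum_nonneg fun j _ => ?_
    split <;> norm_num
  rw [comb]
  constructor
  · intro h i
    simp only
    rw [hvec, indicator_sum_apply]
    by_cases hiΛ : i ∈ Λ
    · rw [if_pos hiΛ]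
      rcases Real.sign_apply_eq (∑ t ∈ Finset.Icc τ (τ + lam - 1), ∑ j ∈ Φ,
        (if i = f^[t] j then (1 : ℝ) else 0)) with h1 | h1 | h1 <;> rw [h1] <;> norm_num
    · rw [if_neg hiΛ]
      have hz : ∑ t ∈ Finset.Icc τ (τ + lam - 1), ∑ j ∈ Φ,
          (if i = f^[t] j then (1 : ℝ) else 0) = 0 := by
        refine Finset.sum_eq_zero fun t ht => Finset.sum_eq_zero fun j hj => ?_
        rw [if_neg]
        intro hij
        exact hiΛ (hij ▸ h j hj t ht)
      rw [hz, Real.sign_zero]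
  · intro h x hx t ht
    by_contra hnot
    have := h (f^[t] x)
    simp only at this
    rw [hvec, indicator_sum_apply, if_neg hnot] at this
    have hpos : (0:ℝ) < ∑ t' ∈ Finset.Icc τ (τ + lam - 1), ∑ j ∈ Φ,
        (if f^[t] x = f^[t'] j then (1 : ℝ) else 0) := by
      refine Finset.sum_pos' (fun t' _ => Finset.sum_nonneg fun j _ => by split <;> norm_num)
        ⟨t, ht, Finset.sum_pos' (fun j _ => by split <;> norm_num)
          ⟨x, hx, by rw [if_pos rfl]; norm_num⟩⟩
    rw [Real.sign_of_pos hpos] at this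
    linarith
end

section
/- Let N ≥ 1, f : Fin N → Fin N and Λ ⊆ Fin N. Let L be the N×N real logic matrix whose i-th column is e_{f i}, let τ be the transient period of f, and let Ξ₂ = Σ_{i∈Λ} e_i ∈ ℝ^N. Then the system is globally approximately synchronous if and only if sgn(L^τ · 1_N) ≤ Ξ₂, where 1_N is the all-ones vector, sgn is applied entrywise and ≤ is the entrywise order on ℝ^N. -/
/-- Corollary 2(2): global approximate synchronization holds iff
`sgn(L^τ · 1_N) ≤ Ξ₂` entrywise, where `Ξ₂` is the index vector of `Λ`
and `1_N` the all-ones vector. -/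
theorem global_approx_sync_iff_sign_condition (N : ℕ) (hN : 1 ≤ N) (f : Fin N → Fin N)
    (Λ : Finset (Fin N))
    (L : Matrix (Fin N) (Fin N) ℝ)
    (hL : L = Matrix.of fun i j => if i = f j then (1 : ℝ) else 0)
    (τ : ℕ) (hτ : IsLeast {t : ℕ | ∀ x : Fin N, f^[t] x ∈ Function.periodicPts f} τ) :
    (∃ ρ : ℕ, 1 ≤ ρ ∧ ∀ x : Fin N, ∀ t ≥ ρ, f^[t] x ∈ Λ) ↔
    (fun i : Fin N =>
        Real.sign (((L ^ τ).mulVec (fun _ : Fin N => (1 : ℝ))) i)) ≤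
      (∑ i ∈ Λ, (Pi.single i (1 : ℝ) : Fin N → ℝ)) := by
  -- entries of powers of L
  have hpow : ∀ n i j, (L ^ n) i j = if i = f^[n] j then (1 : ℝ) else 0 := by
    intro n
    induction n with
    | zero =>
      intro i j
      simp [Matrix.one_apply, eq_comm]
      exact if_congr Iff.rfl rfl rfl
    | succ n ih =>
      intro i j
      rw [pow_succ, Matrix.mul_apply]
      have : ∀ k, (L ^ n) i k * L k j = if k = f j then (L ^ n) i k else 0 := by
        intro k
        rw [hL]
        by_cases h : k = f j <;> simp [h]
      simp only [this, Finset.sum_ite_eq' Finset.univ (f j), Finset.mem_univ, if_true]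
      rw [ih, Function.iterate_succ_apply]
  -- the vector entries
  have hvec : ∀ i, ((L ^ τ).mulVec (fun _ : Fin N => (1 : ℝ))) i =
      ((Finset.univ.filter fun j => f^[τ] j = i).card : ℝ) := by
    intro i
    simp only [Matrix.mulVec, dotProduct, mul_one]
    rw [Finset.card_filter]
    push_cast
    refine Finset.sum_congr rfl fun j _ => ?_
    rw [hpow]
    simp [eq_comm]
  have hrhs : ∀ i, (∑ k ∈ Λ, (Pi.single k (1 : ℝ) : Fin N → ℝ)) i =
      if i ∈ Λ then (1 : ℝ) else 0 := by
    intro i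
    rw [Finset.sum_apply]
    simp [Pi.single_apply]
  -- the RHS is equivalent to range f^[τ] ⊆ Λ
  have key : ((fun i : Fin N =>
        Real.sign (((L ^ τ).mulVec (fun _ : Fin N => (1 : ℝ))) i)) ≤
      (∑ i ∈ Λ, (Pi.single i (1 : ℝ) : Fin N → ℝ))) ↔ ∀ x : Fin N, f^[τ] x ∈ Λ := by
    constructor
    · intro h x
      have hx := h (f^[τ] x)
      simp only at hx
      rw [hvec, hrhs] at hx
      have hcard : 0 < (Finset.univ.filter fun j => f^[τ] j = f^[τ] x).card := by
        refine Finset.card_pos.mpr ⟨x, ?_⟩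
        simp
      rw [Real.sign_of_pos (by exact_mod_cast hcard)] at hx
      by_contra hmem
      rw [if_neg hmem] at hx
      linarith
    · intro h i
      simp only
      rw [hvec, hrhs]
      by_cases hi : i ∈ Λ
      · rw [if_pos hi]
        rcases Real.sign_apply_eq ((Finset.univ.filter fun j => f^[τ] j = i).card : ℝ) with h1 | h1 | h1 <;>
          rw [h1] <;> norm_num
      · rw [if_neg hi]
        have hcard : (Finset.univ.filter fun j => f^[τ] j = i).card = 0 := by
          rw [Finset.card_eq_zero, Finset.filter_eq_empty_iff]
          intro j _
          intro hj
          exact hi (hj ▸ h j)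
        rw [hcard]
        simp [Real.sign_zero]
  rw [key]
  constructor
  · rintro ⟨ρ, hρ, h⟩ x
    have hper : f^[τ] x ∈ Function.periodicPts f := hτ.1 x
    obtain ⟨p, hp, hpx⟩ := hper
    -- f^[p*k] (f^[τ] x) = f^[τ] x
    have hiter : ∀ k, f^[p * k] (f^[τ] x) = f^[τ] x := by
      intro k
      exact hpx.mul_const k
    have hk : τ + p * ρ ≥ ρ := by
      have : ρ ≤ p * ρ := Nat.le_mul_of_pos_left ρ hp
      omega
    have := h x (τ + p * ρ) hk
    rwa [add_comm, Function.iterate_add_apply, hiter ρ] at this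
  · intro h
    refine ⟨τ + 1, by omega, fun x t ht => ?_⟩
    obtain ⟨s, rfl⟩ : ∃ s, t = τ + s := ⟨t - τ, by omega⟩
    rw [Function.iterate_add_apply]
    exact h _
end

section
/- Let N ≥ 1, f : Fin N → Fin N and Λ ⊆ Fin N. Let Φmax = {x : ∃ ρ ≥ 1, ∀ t ≥ ρ, f^[t] x ∈ Λ} be the maximum approximate synchronization basin, and let I be the maximum invariant subset of Λ, i.e., the union of all sets S ⊆ Λ with f(S) ⊆ S. Then Φmax = ∅ if and only if I = ∅. -/
/-- Proposition 2(1): the maximum approximate synchronization basin is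
empty iff the maximum invariant subset of `Λ` is empty. -/
theorem basin_empty_iff_invariant_empty (N : ℕ) (hN : 1 ≤ N) (f : Fin N → Fin N)
    (Λ : Set (Fin N)) (Φmax I : Set (Fin N))
    (hΦmax : Φmax = {x : Fin N | ∃ ρ : ℕ, 1 ≤ ρ ∧ ∀ t ≥ ρ, f^[t] x ∈ Λ})
    (hI : I = ⋃₀ {S : Set (Fin N) | S ⊆ Λ ∧ f '' S ⊆ S}) :
    Φmax = ∅ ↔ I = ∅ := by
  subst hΦmax hI
  constructor
  · intro h
    rw [Set.eq_empty_iff_forall_notMem] at h ⊢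
    intro z hz
    obtain ⟨S, ⟨hSΛ, hSf⟩, hzS⟩ := hz
    apply h z
    refine ⟨1, le_refl 1, fun t ht => ?_⟩
    have hall : ∀ t, f^[t] z ∈ S := by
      intro t
      induction t with
      | zero => simpa
      | succ n ih =>
        rw [Function.iterate_succ_apply']
        exact hSf ⟨_, ih, rfl⟩
    exact hSΛ (hall t)
  · intro h
    rw [Set.eq_empty_iff_forall_notMem] at h ⊢
    intro x hx
    obtain ⟨ρ, hρ, hall⟩ := hx
    apply h (f^[ρ] x)
    refine ⟨{y | ∃ t ≥ ρ, f^[t] x = y}, ⟨?_, ?_⟩, ⟨ρ, le_refl ρ, rfl⟩⟩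
    · rintro y ⟨t, ht, rfl⟩
      exact hall t ht
    · rintro y ⟨z, ⟨t, ht, rfl⟩, rfl⟩
      exact ⟨t + 1, le_trans ht (Nat.le_succ t), Function.iterate_succ_apply' f t x⟩
end

section
/- Let N ≥ 1, f : Fin N → Fin N and Λ ⊆ Fin N. Let Φmax = {x : ∃ ρ ≥ 1, ∀ t ≥ ρ, f^[t] x ∈ Λ} be the maximum approximate synchronization basin, let I be the maximum invariant subset of Λ (the union of all S ⊆ Λ with f(S) ⊆ S), let P(f) be the set of periodic points of f, and let Ω_{Φmax} = {y ∈ P(f) : ∃ x ∈ Φmax, ∃ t ≥ 0, f^[t] x = y} be the set of attractor states reachable from Φmax. Then Φmax ≠ ∅ if and only if I ≠ ∅ and Ω_{Φmax} ⊆ I. -/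
/-- Proposition 2(2): the maximum approximate synchronization basin is
nonempty iff the maximum invariant subset `I` of `Λ` is nonempty and all
attractor states reachable from the basin lie in `I`. -/
theorem basin_nonempty_iff_attractors_in_invariant (N : ℕ) (hN : 1 ≤ N)
    (f : Fin N → Fin N) (Λ : Set (Fin N)) (Φmax I Ω : Set (Fin N))
    (hΦmax : Φmax = {x : Fin N | ∃ ρ : ℕ, 1 ≤ ρ ∧ ∀ t ≥ ρ, f^[t] x ∈ Λ})
    (hI : I = ⋃₀ {S : Set (Fin N) | S ⊆ Λ ∧ f '' S ⊆ S})
    (hΩ : Ω = {y : Fin N | y ∈ Function.periodicPts f ∧ ∃ x ∈ Φmax, ∃ t : ℕ, f^[t] x = y}) :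
    Φmax ≠ ∅ ↔ (I ≠ ∅ ∧ Ω ⊆ I) := by
  -- helper: the tail orbit of a basin point is an invariant subset of Λ
  have tail : ∀ x : Fin N, ∀ ρ : ℕ, (∀ t ≥ ρ, f^[t] x ∈ Λ) →
      {y : Fin N | ∃ t, ρ ≤ t ∧ f^[t] x = y} ⊆ I := by
    intro x ρ hρ
    rw [hI]
    intro y hy
    refine ⟨{y : Fin N | ∃ t, ρ ≤ t ∧ f^[t] x = y}, ⟨?_, ?_⟩, hy⟩
    · rintro z ⟨t, ht, rfl⟩; exact hρ t ht
    · rintro z ⟨w, ⟨t, ht, rfl⟩, rfl⟩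
      exact ⟨t + 1, le_trans ht (Nat.le_succ t), by
        rw [Function.iterate_succ_apply']⟩
  constructor
  · intro hne
    obtain ⟨x, hx⟩ := Set.nonempty_iff_ne_empty.mpr hne
    rw [hΦmax] at hx
    obtain ⟨ρ, hρ1, hρ⟩ := hx
    constructor
    · apply Set.nonempty_iff_ne_empty.mp
      exact ⟨f^[ρ] x, tail x ρ hρ ⟨ρ, le_refl ρ, rfl⟩⟩
    · rw [hΩ]
      rintro y ⟨hper, x', hx', t, rfl⟩
      rw [hΦmax] at hx'
      obtain ⟨ρ', hρ'1, hρ'⟩ := hx'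
      obtain ⟨p, hp, hpy⟩ := hper
      apply tail x' ρ' hρ'
      refine ⟨t + ρ' * p, le_trans ?_ (Nat.le_add_left _ t), ?_⟩
      · exact Nat.le_mul_of_pos_right ρ' hp
      · rw [Nat.add_comm, Function.iterate_add_apply]
        have : Function.IsPeriodicPt f (ρ' * p) (f^[t] x') := by
          simpa [mul_comm] using hpy.const_mul ρ'
        -- this : f^[ρ'*p] (f^[t] x') = f^[t] x'
        exact this
  · rintro ⟨hIne, _⟩
    obtain ⟨x, hx⟩ := Set.nonempty_iff_ne_empty.mpr hIne
    rw [hI] at hx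
    obtain ⟨S, ⟨hSΛ, hSf⟩, hxS⟩ := hx
    have hiter : ∀ t, f^[t] x ∈ S := by
      intro t
      induction t with
      | zero => exact hxS
      | succ n ih =>
        rw [Function.iterate_succ_apply']
        exact hSf ⟨f^[n] x, ih, rfl⟩
    apply Set.nonempty_iff_ne_empty.mp
    refine ⟨x, ?_⟩
    rw [hΦmax]
    exact ⟨1, le_refl 1, fun t _ => hSΛ (hiter t)⟩
end

section
/- Let N ≥ 1, f : Fin N → Fin N, Λ ⊆ Fin N and Φ ⊆ Fin N nonempty, and let τ be the transient period of f and I the maximum invariant subset of Λ. Suppose the system is approximately synchronous with respect to Φ. Then the shortest approximate synchronization time with respect to Φ — the least integer ρ ≥ 1 such that f^[t] x ∈ Λ for all x ∈ Φ and all t ≥ ρ — equals the least integer t ≥ 1 such that f^[t] x ∈ I for all x ∈ Φ; moreover this value is at most max(τ, 1). -/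
/-- Theorem 2(1): if the system is approximately synchronous with respect
to a nonempty `Φ`, the shortest approximate synchronization time with
respect to `Φ` equals the least `t ≥ 1` such that `f^[t]` maps `Φ` into
the maximum invariant subset `I` of `Λ`, and it is at most `max τ 1`. -/
theorem shortest_sync_time_eq (N : ℕ) (hN : 1 ≤ N) (f : Fin N → Fin N)
    (Λ Φ : Set (Fin N)) (hΦ : Φ.Nonempty)
    (τ : ℕ) (hτ : IsLeast {t : ℕ | ∀ x : Fin N, f^[t] x ∈ Function.periodicPts f} τ)
    (I : Set (Fin N)) (hI : I = ⋃₀ {S : Set (Fin N) | S ⊆ Λ ∧ f '' S ⊆ S})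
    (hsync : ∃ ρ : ℕ, 1 ≤ ρ ∧ ∀ x ∈ Φ, ∀ t ≥ ρ, f^[t] x ∈ Λ) :
    sInf {ρ : ℕ | 1 ≤ ρ ∧ ∀ x ∈ Φ, ∀ t ≥ ρ, f^[t] x ∈ Λ} =
        sInf {t : ℕ | 1 ≤ t ∧ ∀ x ∈ Φ, f^[t] x ∈ I} ∧
      sInf {ρ : ℕ | 1 ≤ ρ ∧ ∀ x ∈ Φ, ∀ t ≥ ρ, f^[t] x ∈ Λ} ≤ max τ 1 := by
  obtain ⟨ρ₀, hρ₀1, hρ₀⟩ := hsync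
  have hIΛ : I ⊆ Λ := by
    rw [hI]; rintro x ⟨S, ⟨hSΛ, _⟩, hxS⟩; exact hSΛ hxS
  have hIinv : ∀ x ∈ I, f x ∈ I := by
    rw [hI]; rintro x ⟨S, ⟨hSΛ, hSf⟩, hxS⟩
    exact ⟨S, ⟨hSΛ, hSf⟩, hSf ⟨x, hxS, rfl⟩⟩
  have hIinvIter : ∀ k, ∀ x ∈ I, f^[k] x ∈ I := by
    intro k; induction k with
    | zero => simp
    | succ n ih =>
        intro x hx
        rw [Function.iterate_succ_apply]
        exact ih _ (hIinv x hx)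
  have hset : {ρ : ℕ | 1 ≤ ρ ∧ ∀ x ∈ Φ, ∀ t ≥ ρ, f^[t] x ∈ Λ} =
      {t : ℕ | 1 ≤ t ∧ ∀ x ∈ Φ, f^[t] x ∈ I} := by
    ext ρ
    constructor
    · rintro ⟨h1, h2⟩
      refine ⟨h1, fun x hx => ?_⟩
      rw [hI]
      refine ⟨{y | ∃ t ≥ ρ, f^[t] x = y}, ⟨?_, ?_⟩, ⟨ρ, le_refl _, rfl⟩⟩
      · rintro y ⟨t, ht, rfl⟩; exact h2 x hx t ht
      · rintro y ⟨z, ⟨t, ht, rfl⟩, rfl⟩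
        exact ⟨t + 1, le_trans ht (Nat.le_succ t),
          Function.iterate_succ_apply' f t x⟩
    · rintro ⟨h1, h2⟩
      refine ⟨h1, fun x hx t ht => ?_⟩
      obtain ⟨k, rfl⟩ := Nat.exists_eq_add_of_le ht
      rw [add_comm, Function.iterate_add_apply]
      exact hIΛ (hIinvIter k _ (h2 x hx))
  refine ⟨by rw [hset], ?_⟩
  apply Nat.sInf_le
  refine ⟨le_max_right _ _, fun x hx t ht => ?_⟩
  have htτ : τ ≤ t := le_trans (le_max_left _ _) ht
  obtain ⟨k, rfl⟩ := Nat.exists_eq_add_of_le htτ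
  obtain ⟨p, hp, hpp⟩ := hτ.1 x
  have hper : Function.IsPeriodicPt f p (f^[τ + k] x) := by
    rw [add_comm, Function.iterate_add_apply]
    exact (hpp.apply_iterate k)
  have key : f^[(τ + k) + ρ₀ * p] x = f^[τ + k] x := by
    rw [add_comm (τ + k), Function.iterate_add_apply]
    exact (hper.const_mul ρ₀).eq
  rw [← key]
  exact hρ₀ x hx _ (le_trans (Nat.le_mul_of_pos_right ρ₀ hp) (Nat.le_add_left _ _))
end

section
/- Let N ≥ 1, f : Fin N → Fin N and Λ ⊆ Fin N, and let τ be the transient period of f and I the maximum invariant subset of Λ. Suppose the system is globally approximately synchronous. Then the global shortest approximate synchronization time — the least integer ρ ≥ 1 such that f^[t] x ∈ Λ for all x ∈ Fin N and all t ≥ ρ — equals the least integer t ≥ 1 such that f^[t] x ∈ I for all x ∈ Fin N; moreover this value is at most max(τ, 1). -/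
/-- Theorem 2(2): if the system is globally approximately synchronous, the
global shortest approximate synchronization time equals the least `t ≥ 1`
such that `f^[t]` maps every state into the maximum invariant subset `I`
of `Λ`, and it is at most `max τ 1`. -/
theorem global_shortest_sync_time_eq (N : ℕ) (hN : 1 ≤ N) (f : Fin N → Fin N)
    (Λ : Set (Fin N))
    (τ : ℕ) (hτ : IsLeast {t : ℕ | ∀ x : Fin N, f^[t] x ∈ Function.periodicPts f} τ)
    (I : Set (Fin N)) (hI : I = ⋃₀ {S : Set (Fin N) | S ⊆ Λ ∧ f '' S ⊆ S})
    (hsync : ∃ ρ : ℕ, 1 ≤ ρ ∧ ∀ x : Fin N, ∀ t ≥ ρ, f^[t] x ∈ Λ) :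
    sInf {ρ : ℕ | 1 ≤ ρ ∧ ∀ x : Fin N, ∀ t ≥ ρ, f^[t] x ∈ Λ} =
        sInf {t : ℕ | 1 ≤ t ∧ ∀ x : Fin N, f^[t] x ∈ I} ∧
      sInf {ρ : ℕ | 1 ≤ ρ ∧ ∀ x : Fin N, ∀ t ≥ ρ, f^[t] x ∈ Λ} ≤ max τ 1 := by
  have hIinv : ∀ y ∈ I, f y ∈ I := by
    intro y hy
    rw [hI] at hy ⊢
    obtain ⟨S, ⟨hSΛ, hSf⟩, hyS⟩ := hy
    exact ⟨S, ⟨hSΛ, hSf⟩, hSf ⟨y, hyS, rfl⟩⟩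
  have hIiter : ∀ k : ℕ, ∀ y ∈ I, f^[k] y ∈ I := by
    intro k
    induction k with
    | zero => intro y hy; simpa using hy
    | succ n ih =>
        intro y hy
        rw [Function.iterate_succ_apply]
        exact ih _ (hIinv y hy)
  have hIΛ : I ⊆ Λ := by
    rw [hI]
    intro y hy
    obtain ⟨S, ⟨hSΛ, _⟩, hyS⟩ := hy
    exact hSΛ hyS
  have hAB : {ρ : ℕ | 1 ≤ ρ ∧ ∀ x : Fin N, ∀ t ≥ ρ, f^[t] x ∈ Λ} =
      {t : ℕ | 1 ≤ t ∧ ∀ x : Fin N, f^[t] x ∈ I} := by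
    ext ρ
    constructor
    · rintro ⟨hρ1, hρ⟩
      refine ⟨hρ1, fun x => ?_⟩
      have hsub : {y : Fin N | ∃ z : Fin N, ∃ t ≥ ρ, f^[t] z = y} ⊆ I := by
        rw [hI]
        intro y hy
        refine Set.subset_sUnion_of_mem ?_ hy
        constructor
        · rintro w ⟨z, t, ht, rfl⟩
          exact hρ z t ht
        · rintro w ⟨v, ⟨z, t, ht, rfl⟩, rfl⟩
          exact ⟨z, t + 1, by omega, by rw [Function.iterate_succ_apply']⟩
      exact hsub ⟨x, ρ, le_refl _, rfl⟩
    · rintro ⟨hρ1, hρ⟩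
      refine ⟨hρ1, fun x t ht => ?_⟩
      have h : f^[t] x = f^[t - ρ] (f^[ρ] x) := by
        rw [← Function.iterate_add_apply]
        congr 1
        omega
      rw [h]
      exact hIΛ (hIiter _ _ (hρ x))
  refine ⟨by rw [hAB], ?_⟩
  obtain ⟨ρ0, hρ0, hsyncρ⟩ := hsync
  have hPΛ : ∀ y ∈ Function.periodicPts f, y ∈ Λ := by
    intro y hy
    rw [Function.mem_periodicPts] at hy
    obtain ⟨n, hn, hny⟩ := hy
    have hper : f^[ρ0 * n] y = y := hny.const_mul ρ0
    have hge : ρ0 * n ≥ ρ0 := Nat.le_mul_of_pos_right _ hn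
    have := hsyncρ y (ρ0 * n) hge
    rwa [hper] at this
  have hPinv : ∀ y ∈ Function.periodicPts f, f y ∈ Function.periodicPts f := by
    intro y hy
    rw [Function.mem_periodicPts] at hy ⊢
    obtain ⟨n, hn, hny⟩ := hy
    exact ⟨n, hn, hny.apply⟩
  have hPiter : ∀ k : ℕ, ∀ y ∈ Function.periodicPts f,
      f^[k] y ∈ Function.periodicPts f := by
    intro k
    induction k with
    | zero => intro y hy; simpa using hy
    | succ n ih =>
        intro y hy
        rw [Function.iterate_succ_apply]
        exact ih _ (hPinv y hy)
  apply Nat.sInf_le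
  refine ⟨le_max_right _ _, fun x t ht => ?_⟩
  have hτt : τ ≤ t := le_trans (le_max_left _ _) ht
  have h : f^[t] x = f^[t - τ] (f^[τ] x) := by
    rw [← Function.iterate_add_apply]
    congr 1
    omega
  rw [h]
  exact hPΛ _ (hPiter _ _ (hτ.1 x))
end
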